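/- Let f(x) = 2(x ln x + (1-x) ln(1-x)), let w₀ ∈ (0,1), and let 0 < ε ≤ w₀(1-w₀)/2. Define u(w₀) = -f(w₀) + (f(w₀+ε) + f(w₀-ε))/2. Then |u(w₀) - ε²/(w₀(1-w₀))| ≤ (2/3) ε²/(w₀(1-w₀)); in particular (1/3)·ε²/(w₀(1-w₀)) ≤ u(w₀) ≤ (5/3)·ε²/(w₀(1-w₀)). -/

import Mathlib

lemma hasDerivAt_F {x : ℝ} (hx : 0 < x) (hx1 : x < 1) :
    HasDerivAt (fun x => 2*(x*Real.log x + (1-x)*Real.log (1-x)))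
      (2*(Real.log x - Real.log (1-x))) x := by
  have hb : (0:ℝ) < 1 - x := by linarith
  have h1 : HasDerivAt (fun x : ℝ => x * Real.log x) (Real.log x + 1) x := by
    have := (hasDerivAt_id x).mul (Real.hasDerivAt_log hx.ne')
    refine this.congr_deriv ?_
    field_simp
    simp only [id]; ring
  have hinner : HasDerivAt (fun x : ℝ => 1 - x) (-1) x := by
    simpa using (hasDerivAt_id x).const_sub 1
  have hlog : HasDerivAt (fun x : ℝ => Real.log (1-x)) ((1-x)⁻¹ * (-1)) x :=
    (Real.hasDerivAt_log hb.ne').comp x hinner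
  have h2 : HasDerivAt (fun x : ℝ => (1-x) * Real.log (1-x)) (-(Real.log (1-x) + 1)) x := by
    have := hinner.mul hlog
    refine this.congr_deriv ?_
    field_simp
    ring
  have := (h1.add h2).const_mul 2
  refine this.congr_deriv ?_
  ring

lemma hasDerivAt_F' {x : ℝ} (hx : 0 < x) (hx1 : x < 1) :
    HasDerivAt (fun x => 2*(Real.log x - Real.log (1-x)))
      (2*(x⁻¹ + (1-x)⁻¹)) x := by
  have hb : (0:ℝ) < 1 - x := by linarith
  have hinner : HasDerivAt (fun x : ℝ => 1 - x) (-1) x := by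
    simpa using (hasDerivAt_id x).const_sub 1
  have hlog : HasDerivAt (fun x : ℝ => Real.log (1-x)) ((1-x)⁻¹ * (-1)) x :=
    (Real.hasDerivAt_log hb.ne').comp x hinner
  have := ((Real.hasDerivAt_log hx.ne').sub hlog).const_mul 2
  refine this.congr_deriv ?_
  ring

lemma key_nonneg {ε : ℝ} (hε : 0 < ε) (φ φ' : ℝ → ℝ)
    (hd : ∀ t ∈ Set.Icc 0 ε, HasDerivAt φ (φ' t) t)
    (h0 : φ 0 = 0) (h' : ∀ t ∈ Set.Icc 0 ε, 0 ≤ φ' t) :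
    ∀ t ∈ Set.Icc 0 ε, 0 ≤ φ t := by
  have hmono : MonotoneOn φ (Set.Icc 0 ε) := by
    apply monotoneOn_of_deriv_nonneg (convex_Icc 0 ε)
    · exact fun t ht => (hd t ht).continuousAt.continuousWithinAt
    · intro t ht
      rw [interior_Icc] at ht
      exact (hd t (Set.Ioo_subset_Icc_self ht)).differentiableAt.differentiableWithinAt
    · intro t ht
      rw [interior_Icc] at ht
      rw [(hd t (Set.Ioo_subset_Icc_self ht)).deriv]
      exact h' t (Set.Ioo_subset_Icc_self ht)
  intro t ht
  have := hmono (Set.left_mem_Icc.mpr hε.le) ht ht.1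
  linarith [this, h0 ▸ this]

set_option maxHeartbeats 1000000 in
theorem stmt_5 (f : ℝ → ℝ)
    (hf : ∀ x, f x = 2 * (x * Real.log x + (1 - x) * Real.log (1 - x)))
    (w₀ ε : ℝ) (hw₀ : w₀ ∈ Set.Ioo (0:ℝ) 1)
    (hε : 0 < ε) (hε' : ε ≤ w₀ * (1 - w₀) / 2)
    (u : ℝ) (hu : u = -f w₀ + (f (w₀ + ε) + f (w₀ - ε)) / 2) :
    |u - ε ^ 2 / (w₀ * (1 - w₀))| ≤ (2 / 3) * (ε ^ 2 / (w₀ * (1 - w₀))) ∧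
    (1 / 3) * (ε ^ 2 / (w₀ * (1 - w₀))) ≤ u ∧
    u ≤ (5 / 3) * (ε ^ 2 / (w₀ * (1 - w₀))) := by
  obtain ⟨ha, ha1⟩ := hw₀
  have hfe : f = fun x => 2 * (x * Real.log x + (1 - x) * Real.log (1 - x)) := funext hf
  subst hfe
  set a := w₀ with ha_def
  have hb : 0 < 1 - a := by linarith
  have hq0 : (0:ℝ) < a * (1 - a) := mul_pos ha hb
  -- range facts
  have hrange : ∀ t ∈ Set.Icc (0:ℝ) ε,
      0 < a + t ∧ a + t < 1 ∧ 0 < a - t ∧ a - t < 1 := by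
    rintro t ⟨ht0, ht1⟩
    have h1 : t ≤ a * (1 - a) / 2 := le_trans ht1 hε'
    refine ⟨by linarith, by nlinarith, by nlinarith, by nlinarith⟩
  -- auxiliary functions
  set F : ℝ → ℝ := fun x => 2 * (x * Real.log x + (1 - x) * Real.log (1 - x)) with hF_def
  set g : ℝ → ℝ := fun t => F (a + t) + F (a - t) - 2 * F a with hg_def
  set G' : ℝ → ℝ := fun t =>
    2*(Real.log (a+t) - Real.log (1-(a+t))) - 2*(Real.log (a-t) - Real.log (1-(a-t))) with hG'_def
  set G'' : ℝ → ℝ := fun t =>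
    2*((a+t)⁻¹ + (1-(a+t))⁻¹) + 2*((a-t)⁻¹ + (1-(a-t))⁻¹) with hG''_def
  have hadd : ∀ t : ℝ, HasDerivAt (fun s : ℝ => a + s) 1 t := by
    intro t; simpa using (hasDerivAt_id t).const_add a
  have hsub : ∀ t : ℝ, HasDerivAt (fun s : ℝ => a - s) (-1) t := by
    intro t; simpa using (hasDerivAt_id t).const_sub a
  have hg : ∀ t ∈ Set.Icc (0:ℝ) ε, HasDerivAt g (G' t) t := by
    intro t ht
    obtain ⟨h1, h2, h3, h4⟩ := hrange t ht
    have d1 : HasDerivAt (fun s : ℝ => F (a + s)) (2*(Real.log (a+t) - Real.log (1-(a+t))) * 1) t :=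
      (hasDerivAt_F h1 h2).comp t (hadd t)
    have d2 : HasDerivAt (fun s : ℝ => F (a - s)) (2*(Real.log (a-t) - Real.log (1-(a-t))) * (-1)) t :=
      (hasDerivAt_F h3 h4).comp t (hsub t)
    have := (d1.add d2).sub_const (2 * F a)
    refine this.congr_deriv ?_
    simp only [hG'_def]
    ring
  have hg' : ∀ t ∈ Set.Icc (0:ℝ) ε, HasDerivAt G' (G'' t) t := by
    intro t ht
    obtain ⟨h1, h2, h3, h4⟩ := hrange t ht
    have d1 : HasDerivAt (fun s : ℝ => 2*(Real.log (a+s) - Real.log (1-(a+s))))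
        (2*((a+t)⁻¹ + (1-(a+t))⁻¹) * 1) t :=
      (hasDerivAt_F' h1 h2).comp t (hadd t)
    have d2 : HasDerivAt (fun s : ℝ => 2*(Real.log (a-s) - Real.log (1-(a-s))))
        (2*((a-t)⁻¹ + (1-(a-t))⁻¹) * (-1)) t :=
      (hasDerivAt_F' h3 h4).comp t (hsub t)
    have := d1.sub d2
    refine this.congr_deriv ?_
    simp only [hG''_def]
    ring
  -- pointwise bounds on G''
  have hbounds : ∀ t ∈ Set.Icc (0:ℝ) ε,
      4 / (a * (1 - a)) ≤ G'' t ∧ G'' t ≤ 20 / (3 * (a * (1 - a))) := by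
    intro t ht
    obtain ⟨h1, h2, h3, h4⟩ := hrange t ht
    obtain ⟨ht0, ht1⟩ := ht
    have h5 : t ≤ a * (1 - a) / 2 := le_trans ht1 hε'
    have hP : (0:ℝ) < (a + t) * (1 - (a + t)) := mul_pos h1 (by linarith)
    have hQ : (0:ℝ) < (a - t) * (1 - (a - t)) := mul_pos h3 (by linarith)
    have ekey : ∀ x : ℝ, 0 < x → x < 1 → x⁻¹ + (1-x)⁻¹ = 1 / (x * (1-x)) := by
      intro x hx hx1
      have hx2 : (1:ℝ) - x ≠ 0 := by linarith
      field_simp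
      ring
    have eG : G'' t = 2 / ((a + t) * (1 - (a + t))) + 2 / ((a - t) * (1 - (a - t))) := by
      simp only [hG''_def]
      rw [ekey _ h1 h2, ekey _ h3 h4]
      ring
    rw [eG, div_add_div _ _ hP.ne' hQ.ne']
    constructor
    · rw [div_le_div_iff₀ hq0 (mul_pos hP hQ)]
      nlinarith [sq_nonneg t, sq_nonneg (1-2*a),
        mul_nonneg (mul_nonneg ht0 ht0) (sq_nonneg (1-2*a)), sq_nonneg (t*t)]
    · rw [div_le_div_iff₀ (mul_pos hP hQ) (by positivity : (0:ℝ) < 3 * (a * (1-a)))]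
      nlinarith [sq_nonneg t, sq_nonneg (1-2*a),
        mul_nonneg (mul_nonneg ht0 ht0) (sq_nonneg (1-2*a)), sq_nonneg (t*t),
        mul_pos ha (by linarith : (0:ℝ) < 1-a), sq_nonneg (a*(1-a))]
  -- lower bound: g ε ≥ 2 ε²/q
  have hG'0 : G' 0 = 0 := by simp [hG'_def]
  have hg0 : g 0 = 0 := by simp [hg_def]; ring
  have hlow : 2 * (ε^2 / (a * (1 - a))) ≤ g ε := by
    set c : ℝ := 4 / (a * (1 - a)) with hc
    have h1 : ∀ t ∈ Set.Icc (0:ℝ) ε, 0 ≤ G' t - c * t := by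
      apply key_nonneg hε (fun t => G' t - c * t) (fun t => G'' t - c)
      · intro t ht
        exact (hg' t ht).sub (by simpa using (hasDerivAt_id t).const_mul c)
      · simp [hG'0]
      · intro t ht; have := (hbounds t ht).1; simp only [hc] at *; linarith
    have h2 : ∀ t ∈ Set.Icc (0:ℝ) ε, 0 ≤ g t - c * t^2 / 2 := by
      apply key_nonneg hε _ (fun t => G' t - c * t)
      · intro t ht
        have : HasDerivAt (fun t : ℝ => c * t^2 / 2) (c * t) t := by
          have := ((hasDerivAt_pow 2 t).const_mul c).div_const 2
          refine this.congr_deriv ?_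
          simp; ring
        exact (hg t ht).sub this
      · simp [hg0]
      · exact h1
    have := h2 ε ⟨hε.le, le_refl _⟩
    have hc2 : c * ε^2 / 2 = 2 * (ε^2 / (a * (1-a))) := by
      rw [hc]; field_simp; ring
    linarith [hc2 ▸ this]
  -- upper bound: g ε ≤ (10/3) ε²/q
  have hupp : g ε ≤ (10/3) * (ε^2 / (a * (1 - a))) := by
    set c : ℝ := 20 / (3 * (a * (1 - a))) with hc
    have h1 : ∀ t ∈ Set.Icc (0:ℝ) ε, 0 ≤ c * t - G' t := by
      apply key_nonneg hε (fun t => c * t - G' t) (fun t => c - G'' t)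
      · intro t ht
        exact HasDerivAt.sub (by simpa using (hasDerivAt_id t).const_mul c) (hg' t ht)
      · simp [hG'0]
      · intro t ht; have := (hbounds t ht).2; simp only [hc] at *; linarith
    have h2 : ∀ t ∈ Set.Icc (0:ℝ) ε, 0 ≤ c * t^2 / 2 - g t := by
      apply key_nonneg hε _ (fun t => c * t - G' t)
      · intro t ht
        have hct : HasDerivAt (fun t : ℝ => c * t^2 / 2) (c * t) t := by
          have := ((hasDerivAt_pow 2 t).const_mul c).div_const 2
          refine this.congr_deriv ?_
          simp; ring
        exact hct.sub (hg t ht)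
      · simp [hg0]
      · exact h1
    have := h2 ε ⟨hε.le, le_refl _⟩
    have hc2 : c * ε^2 / 2 = (10/3) * (ε^2 / (a * (1-a))) := by
      rw [hc]; field_simp; ring
    linarith [hc2 ▸ this]
  -- conclude
  have hug : u = g ε / 2 := by
    rw [hu]; simp only [hg_def, hF_def]; ring
  rw [hug]
  refine ⟨?_, by linarith, by linarith⟩
  rw [abs_le]
  constructor <;> linarith
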